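/- If x ∈ 𝕂^n satisfies x_1 x_2 ⋯ x_n = u_1 u_2 ⋯ u_n, then f_u(x) = x. -/

import Mathlib

/- Setting: a semifield `K` (commutative associative addition `add`, multiplicative
abelian group, distributivity), a fixed `u ∈ K^n`, all `n`-tuples extended
`n`-periodically to families indexed by `ℤ`. -/

variable {K : Type*} [CommGroup K]

/-- The nonempty sum `f 0 + f 1 + ⋯ + f r` with respect to the binary operation `add`. -/
def addSum (add : K → K → K) (f : ℕ → K) : ℕ → K
  | 0 => f 0
  | r + 1 => add (addSum add f r) (f (r + 1))

/-- The element `t_{r,j} = Σ_{k=0}^{r} (∏_{i=1}^{k} x_{j+i}) · (∏_{i=k+1}^{r} u_{j+i})`. -/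
def tpoly (add : K → K → K) (u x : ℤ → K) (r : ℕ) (j : ℤ) : K :=
  addSum add
    (fun k => (∏ i ∈ Finset.Icc 1 k, x (j + i)) * ∏ i ∈ Finset.Icc (k + 1) r, u (j + i)) r

open Fin.IntCast in
/-- The `n`-periodic extension of an `n`-tuple to a family indexed by `ℤ`. -/
def extend {n : ℕ} [NeZero n] (v : Fin n → K) : ℤ → K := fun i => v (i : Fin n)

/-- The map `f_u : K^n → K^n`, sending `x` to the `n`-tuple `y` with
`y_i = u_i · (u_{i-1} t_{n-1,i-1}) / (x_{i+1} t_{n-1,i+1})`. -/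
def fu {n : ℕ} [NeZero n] (add : K → K → K) (u : Fin n → K) (x : Fin n → K) : Fin n → K :=
  fun i =>
    u i * (extend u ((i : ℤ) - 1) * tpoly add (extend u) (extend x) (n - 1) ((i : ℤ) - 1)) /
      (extend x ((i : ℤ) + 1) * tpoly add (extend u) (extend x) (n - 1) ((i : ℤ) + 1))

section Aux

variable (add : K → K → K)

lemma addSum_congr {f g : ℕ → K} (r : ℕ) (h : ∀ k ≤ r, f k = g k) :
    addSum add f r = addSum add g r := by
  induction r with
  | zero => exact h 0 le_rfl
  | succ r ih =>
      simp only [addSum]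
      rw [ih (fun k hk => h k (hk.trans (Nat.le_succ r))), h (r + 1) le_rfl]

lemma addSum_mul (hdistrib : ∀ a b c : K, a * add b c = add (a * b) (a * c))
    (a : K) (f : ℕ → K) (r : ℕ) : a * addSum add f r = addSum add (fun k => a * f k) r := by
  induction r with
  | zero => rfl
  | succ r ih => simp only [addSum]; rw [hdistrib, ih]

lemma addSum_shift (hadd_assoc : ∀ a b c : K, add (add a b) c = add a (add b c))
    (f : ℕ → K) (r : ℕ) :
    addSum add f (r + 1) = add (f 0) (addSum add (fun k => f (k + 1)) r) := by
  induction r with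
  | zero => rfl
  | succ r ih =>
      show add (addSum add f (r + 1)) (f (r + 2)) = _
      rw [ih, hadd_assoc]
      rfl

/-- Rotation: if `a 0 = a (m+1)` then `a 0 + ⋯ + a m = a 1 + ⋯ + a (m+1)`. -/
lemma addSum_rot (hadd_assoc : ∀ a b c : K, add (add a b) c = add a (add b c))
    (hadd_comm : ∀ a b : K, add a b = add b a)
    (a : ℕ → K) (m : ℕ) (h : a 0 = a (m + 1)) :
    addSum add a m = addSum add (fun k => a (k + 1)) m := by
  cases m with
  | zero => exact h
  | succ m' =>
      rw [addSum_shift add hadd_assoc a m']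
      show _ = add (addSum add (fun k => a (k + 1)) m') (a (m' + 2))
      rw [← h, hadd_comm]

lemma prod_Icc_shift (f : ℕ → K) (a b : ℕ) :
    ∏ i ∈ Finset.Icc (a + 1) (b + 1), f i = ∏ i ∈ Finset.Icc a b, f (i + 1) := by
  rw [← Finset.map_add_right_Icc a b 1, Finset.prod_map]
  rfl

end Aux

section Periodic

variable {n : ℕ} [NeZero n]

omit [CommGroup K] in
lemma extend_add_n (v : Fin n → K) (i : ℤ) : extend v (i + n) = extend v i := by
  unfold extend
  congr 1
  push_cast
  apply Fin.ext
  simp [Fin.val_intCast]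

lemma Q_shift (v : Fin n → K) (j : ℤ) :
    ∏ i ∈ Finset.range n, extend v (j + 1 + i) = ∏ i ∈ Finset.range n, extend v (j + i) := by
  obtain ⟨m, rfl⟩ : ∃ m, n = m + 1 := ⟨n - 1, (Nat.succ_pred_eq_of_ne_zero (NeZero.ne n)).symm⟩
  rw [Finset.prod_range_succ, Finset.prod_range_succ']
  have h1 : (j + 1 + (m : ℤ)) = j + ((m + 1 : ℕ) : ℤ) := by push_cast; ring
  have h2 : ∀ i : ℕ, j + 1 + (i : ℤ) = j + ((i + 1 : ℕ) : ℤ) := by intro i; push_cast; ring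
  rw [h1, extend_add_n]
  simp only [h2]
  push_cast
  simp [mul_comm]

lemma Q_const (v : Fin n → K) (j : ℤ) :
    ∏ i ∈ Finset.range n, extend v (j + i) = ∏ i ∈ Finset.range n, extend v (i : ℤ) := by
  induction j using Int.induction_on with
  | zero => simp
  | succ k ih => rw [← ih]; exact Q_shift v k
  | pred k ih => rw [← ih, ← Q_shift v (-(k : ℤ) - 1)]; norm_num

open Fin.NatCast Fin.IntCast in
lemma prod_Icc_period (v : Fin n → K) (j : ℤ) :
    ∏ i ∈ Finset.Icc 1 n, extend v (j + i) = ∏ i, v i := by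
  obtain ⟨m, hm⟩ : ∃ m, n = m + 1 := ⟨n - 1, (Nat.succ_pred_eq_of_ne_zero (NeZero.ne n)).symm⟩
  have h0 : Finset.Icc 1 n = Finset.Icc (0 + 1) (m + 1) := by rw [hm]
  rw [h0, prod_Icc_shift]
  have h1 : Finset.Icc 0 m = Finset.range n := by
    rw [hm, ← Nat.Ico_zero_eq_range, Finset.Ico_add_one_right_eq_Icc]
  rw [h1]
  have h2 : ∀ i : ℕ, j + ((i + 1 : ℕ) : ℤ) = (j + 1) + i := by intro i; push_cast; ring
  simp only [h2]
  rw [Q_const]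
  have h3 : ∀ i : ℕ, extend v (i : ℤ) = v (i : Fin n) := by
    intro i; apply congrArg v; apply Fin.ext; simp [Fin.val_intCast]
    rw [← Int.natCast_mod, Int.toNat_natCast]
  simp only [h3]
  rw [← Fin.prod_univ_eq_prod_range (fun i => v ((i : ℕ) : Fin n)) n]
  simp [Fin.cast_val_eq_self]

/-- The key identity: `u_j t_{n-1,j} = x_{j+1} t_{n-1,j+1}`. -/
lemma key (add : K → K → K)
    (hadd_assoc : ∀ a b c : K, add (add a b) c = add a (add b c))
    (hadd_comm : ∀ a b : K, add a b = add b a)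
    (hdistrib : ∀ a b c : K, a * add b c = add (a * b) (a * c))
    (u : Fin n → K) (x : Fin n → K) (hx : ∏ i, x i = ∏ i, u i) (j : ℤ) :
    extend u j * tpoly add (extend u) (extend x) (n - 1) j =
      extend x (j + 1) * tpoly add (extend u) (extend x) (n - 1) (j + 1) := by
  obtain ⟨m, hm⟩ : ∃ m, n = m + 1 := ⟨n - 1, (Nat.succ_pred_eq_of_ne_zero (NeZero.ne n)).symm⟩
  have hm' : n - 1 = m := by omega
  set U := extend u with hU
  set X := extend x with hX
  set a : ℕ → K := fun k =>
    (∏ i ∈ Finset.Icc 1 k, X (j + i)) * ∏ i ∈ Finset.Icc (k + 1) (m + 1), U (j + i) with ha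
  rw [hm', tpoly, tpoly, addSum_mul add hdistrib, addSum_mul add hdistrib]
  have hL : addSum add (fun k => U j *
      ((∏ i ∈ Finset.Icc 1 k, X (j + i)) * ∏ i ∈ Finset.Icc (k + 1) m, U (j + i))) m =
      addSum add a m := by
    apply addSum_congr
    intro k hk
    have hsplit : ∏ i ∈ Finset.Icc (k + 1) (m + 1), U (j + i) =
        (∏ i ∈ Finset.Icc (k + 1) m, U (j + i)) * U (j + ((m + 1 : ℕ) : ℤ)) := by
      rw [Finset.prod_Icc_succ_top (by omega : k + 1 ≤ m + 1)]
    have hper : U (j + ((m + 1 : ℕ) : ℤ)) = U j := by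
      have he : j + ((m + 1 : ℕ) : ℤ) = j + (n : ℤ) := by rw [hm]
      rw [he, hU, extend_add_n]
    simp only [ha, hsplit, hper]
    rw [mul_comm (U j), mul_assoc]
  have hR : addSum add (fun k => X (j + 1) *
      ((∏ i ∈ Finset.Icc 1 k, X (j + 1 + i)) * ∏ i ∈ Finset.Icc (k + 1) m, U (j + 1 + i))) m =
      addSum add (fun k => a (k + 1)) m := by
    apply addSum_congr
    intro k hk
    have e1 : ∏ i ∈ Finset.Icc 1 (k + 1), X (j + i) =
        X (j + 1) * ∏ i ∈ Finset.Icc 1 k, X (j + 1 + i) := by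
      have h01 : Finset.Icc 1 (k + 1) = Finset.Icc (0 + 1) (k + 1) := by norm_num
      rw [h01, prod_Icc_shift, Finset.Icc_eq_cons_Ioc (Nat.zero_le k), Finset.prod_cons,
        ← Finset.Icc_add_one_left_eq_Ioc]
      congr 1
      apply Finset.prod_congr rfl
      intro i _
      congr 1
      omega
    have e2 : ∏ i ∈ Finset.Icc (k + 1 + 1) (m + 1), U (j + i) =
        ∏ i ∈ Finset.Icc (k + 1) m, U (j + 1 + i) := by
      rw [prod_Icc_shift]
      apply Finset.prod_congr rfl
      intro i _
      congr 1
      omega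
    simp only [ha, e1, e2]
    exact (mul_assoc _ _ _).symm
  rw [hL, hR]
  apply addSum_rot add hadd_assoc hadd_comm
  have ha0 : a 0 = ∏ i, u i := by
    simp only [ha]
    rw [Finset.Icc_eq_empty (by omega : ¬(1:ℕ) ≤ 0), Finset.prod_empty, one_mul]
    have h01 : Finset.Icc (0 + 1) (m + 1) = Finset.Icc 1 n := by rw [hm]
    rw [h01, hU, prod_Icc_period]
  have ham : a (m + 1) = ∏ i, x i := by
    simp only [ha]
    rw [Finset.Icc_eq_empty (by omega : ¬m + 1 + 1 ≤ m + 1), Finset.prod_empty, mul_one]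
    have h01 : Finset.Icc 1 (m + 1) = Finset.Icc 1 n := by rw [hm]
    rw [h01, hX, prod_Icc_period]
  rw [ha0, ham, hx]

end Periodic


/-- Proposition: if `x_1 x_2 ⋯ x_n = u_1 u_2 ⋯ u_n`, then `f_u(x) = x`. -/
theorem fu_fixed_point (n : ℕ) [NeZero n] (add : K → K → K)
    (hadd_assoc : ∀ a b c : K, add (add a b) c = add a (add b c))
    (hadd_comm : ∀ a b : K, add a b = add b a)
    (hdistrib : ∀ a b c : K, a * add b c = add (a * b) (a * c))
    (u : Fin n → K)
    (x : Fin n → K) (hx : ∏ i, x i = ∏ i, u i) :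
    fu add u x = x := by
  funext i
  have k1 := key add hadd_assoc hadd_comm hdistrib u x hx ((i : ℤ) - 1)
  have k2 := key add hadd_assoc hadd_comm hdistrib u x hx (i : ℤ)
  have e : ((i : ℤ) - 1) + 1 = (i : ℤ) := by ring
  rw [e] at k1
  show u i * (extend u ((i : ℤ) - 1) * tpoly add (extend u) (extend x) (n - 1) ((i : ℤ) - 1)) /
      (extend x ((i : ℤ) + 1) * tpoly add (extend u) (extend x) (n - 1) ((i : ℤ) + 1)) = x i
  rw [k1, ← k2]
  have hU : extend u ((i : ℤ)) = u i := by simp [extend, Fin.cast_val_eq_self]; apply congrArg u; apply Fin.ext; simp [Fin.val_intCast]; rw [← Int.natCast_mod]; simp [Nat.mod_eq_of_lt i.isLt]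
  have hX : extend x ((i : ℤ)) = x i := by simp [extend, Fin.cast_val_eq_self]; apply congrArg x; apply Fin.ext; simp [Fin.val_intCast]; rw [← Int.natCast_mod]; simp [Nat.mod_eq_of_lt i.isLt]
  rw [hU, hX, div_eq_iff_eq_mul]
  exact mul_left_comm _ _ _
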